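/- Let X and Y be infinite dimensional Banach spaces that are essentially incomparable. Then no compact operator S ∈ B(Y) is equivalent after extension to any operator T ∈ B(X). -/

import Mathlib

open ContinuousLinearMap

/-- A bounded operator is Fredholm if it has finite dimensional kernel, closed range,
and finite codimensional range. -/
def IsFredholmOp {X Y : Type*} [NormedAddCommGroup X] [NormedSpace ℂ X] [CompleteSpace X]
    [NormedAddCommGroup Y] [NormedSpace ℂ Y] [CompleteSpace Y] (f : X →L[ℂ] Y) : Prop :=
  FiniteDimensional ℂ (LinearMap.ker (f : X →ₗ[ℂ] Y)) ∧ IsClosed (LinearMap.range (f : X →ₗ[ℂ] Y) : Set Y) ∧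
    FiniteDimensional ℂ (Y ⧸ LinearMap.range (f : X →ₗ[ℂ] Y))

/-- A compact operator whose range has a finite dimensional complement forces the whole
codomain to be finite dimensional. -/
theorem finiteDimensional_of_compact_of_finiteDimensional_quotient
    {Y : Type*} [NormedAddCommGroup Y] [NormedSpace ℂ Y] [CompleteSpace Y]
    (C : Y →L[ℂ] Y) (hC : IsCompactOperator C)
    (hq : FiniteDimensional ℂ (Y ⧸ LinearMap.range (C : Y →ₗ[ℂ] Y))) :
    FiniteDimensional ℂ Y := by
  obtain ⟨W, hW⟩ := Submodule.exists_isCompl (LinearMap.range (C : Y →ₗ[ℂ] Y))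
  haveI : FiniteDimensional ℂ W :=
    LinearEquiv.finiteDimensional (Submodule.quotientEquivOfIsCompl _ W hW).symm.symm
  haveI : ProperSpace W := FiniteDimensional.proper ℂ W
  -- The operator `Ψ (y, w) = C y + w` is a surjective compact operator on `Y`.
  set Ψ : (Y × W) →L[ℂ] Y := C.coprod W.subtypeL with hΨdef
  have hΨsurj : Function.Surjective Ψ := by
    intro y
    have hy : y ∈ LinearMap.range (C : Y →ₗ[ℂ] Y) ⊔ W := by rw [hW.sup_eq_top]; trivial
    obtain ⟨a, ha, b, hb, rfl⟩ := Submodule.mem_sup.1 hy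
    obtain ⟨x, rfl⟩ := ha
    exact ⟨(x, ⟨b, hb⟩), rfl⟩
  have hΨcompact : IsCompactOperator Ψ := by
    have h1 : IsCompactOperator (C ∘L fst ℂ Y W) := hC.comp_clm (fst ℂ Y W)
    have h2 : IsCompactOperator (W.subtypeL ∘L snd ℂ Y W) := by
      refine ⟨W.subtypeL '' Metric.closedBall 0 1, ?_, ?_⟩
      · exact ((isCompact_closedBall (0 : W) 1).image W.subtypeL.continuous)
      · refine Filter.mem_of_superset (Metric.closedBall_mem_nhds (0 : Y × W) one_pos) ?_
        rintro ⟨y, w⟩ hyw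
        have hw : ‖w‖ ≤ 1 := by
          have h1 : ‖((y, w) : Y × W)‖ ≤ 1 := by simpa using mem_closedBall_zero_iff.1 hyw
          exact le_trans (norm_snd_le ((y, w) : Y × W)) h1
        exact ⟨w, mem_closedBall_zero_iff.2 hw, rfl⟩
    have hsum := h1.add h2
    have : (Ψ : Y × W → Y) = fun p => (C ∘L fst ℂ Y W) p + (W.subtypeL ∘L snd ℂ Y W) p := by
      funext p
      simp [Ψ]
    rw [this]
    exact hsum
  -- By the open mapping theorem, a compact surjection gives a compact closed ball.
  obtain ⟨K, hK, hKmem⟩ := hΨcompact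
  have hopen : IsOpenMap Ψ := Ψ.isOpenMap hΨsurj
  have hU : Ψ '' interior (Ψ ⁻¹' K) ∈ nhds (0 : Y) := by
    have h0 : (0 : Y × W) ∈ interior (Ψ ⁻¹' K) := mem_interior_iff_mem_nhds.2 hKmem
    have : Ψ (0 : Y × W) = 0 := map_zero Ψ
    exact (hopen _ isOpen_interior).mem_nhds ⟨0, h0, this⟩
  obtain ⟨ε, hε, hball⟩ := Metric.nhds_basis_closedBall.mem_iff.1 hU
  have hsubK : Metric.closedBall (0 : Y) ε ⊆ K := by
    refine hball.trans ?_
    rintro y ⟨p, hp, rfl⟩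
    exact Set.mem_preimage.1 (interior_subset hp)
  have : IsCompact (Metric.closedBall (0 : Y) ε) :=
    hK.of_isClosed_subset Metric.isClosed_closedBall hsubK
  exact FiniteDimensional.of_isCompact_closedBall₀ ℂ hε this

/-- If `X` and `Y` are infinite dimensional, essentially incomparable Banach
spaces (every operator `X → Y` is inessential), then no compact operator `S ∈ B(Y)` is
equivalent after extension to any operator `T ∈ B(X)`. -/
theorem no_eae_to_compact_of_essentially_incomparable
    (X Y : Type*) [NormedAddCommGroup X] [NormedSpace ℂ X] [CompleteSpace X]
    [NormedAddCommGroup Y] [NormedSpace ℂ Y] [CompleteSpace Y]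
    (hX : ¬ FiniteDimensional ℂ X) (hY : ¬ FiniteDimensional ℂ Y)
    (hinc : ∀ (A : X →L[ℂ] Y) (B : Y →L[ℂ] X),
      IsFredholmOp (ContinuousLinearMap.id ℂ X - B ∘L A))
    (T : X →L[ℂ] X) (S : Y →L[ℂ] Y) (hS : IsCompactOperator S) :
    ¬ ∃ (E : (Y × X) ≃L[ℂ] (X × Y)) (F : (X × Y) ≃L[ℂ] (Y × X)),
      T.prodMap (ContinuousLinearMap.id ℂ Y) =
        (E : (Y × X) →L[ℂ] (X × Y)) ∘L
          (S.prodMap (ContinuousLinearMap.id ℂ X)) ∘L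
            (F : (X × Y) →L[ℂ] (Y × X)) := by
  rintro ⟨E, F, heq⟩
  -- block components
  set A : X →L[ℂ] Y := (snd ℂ X Y) ∘L (E : (Y × X) →L[ℂ] (X × Y)) ∘L (inr ℂ Y X) with hAdef
  set B : Y →L[ℂ] X := (snd ℂ Y X) ∘L (F : (X × Y) →L[ℂ] (Y × X)) ∘L (inr ℂ X Y) with hBdef
  set F12 : Y →L[ℂ] Y := (fst ℂ Y X) ∘L (F : (X × Y) →L[ℂ] (Y × X)) ∘L (inr ℂ X Y) with hF12def
  set G : Y →L[ℂ] Y := (snd ℂ X Y) ∘L (E : (Y × X) →L[ℂ] (X × Y)) ∘L (inl ℂ Y X) with hGdef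
  set C : Y →L[ℂ] Y := G ∘L S ∘L F12 with hCdef
  -- key block identity : `id_Y = C + A ∘ B`
  have key : ∀ y : Y, y = C y + A (B y) := by
    intro y
    have h0 : (T.prodMap (ContinuousLinearMap.id ℂ Y)) (0, y) =
        (E : (Y × X) →L[ℂ] (X × Y)) ((S.prodMap (ContinuousLinearMap.id ℂ X))
          ((F : (X × Y) →L[ℂ] (Y × X)) (0, y))) := by
      rw [heq]; rfl
    have h1 : (F : (X × Y) →L[ℂ] (Y × X)) (0, y) = (F12 y, B y) := rfl
    rw [h1] at h0
    have h2 : (S.prodMap (ContinuousLinearMap.id ℂ X)) (F12 y, B y)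
        = (S (F12 y), (0 : X)) + ((0 : Y), B y) := by
      simp [Prod.ext_iff]
    rw [h2, map_add] at h0
    have h3 := congrArg Prod.snd h0
    simpa [C, G, A, Prod.ext_iff] using h3
  -- `C` is compact
  have hC : IsCompactOperator C := by
    have h := (hS.comp_clm F12).continuous_comp G.continuous
    have : (C : Y → Y) = (G : Y → Y) ∘ ((S : Y → Y) ∘ (F12 : Y → Y)) := by
      funext y; simp [C]
    rw [this]
    exact h
  -- the cokernel of `C` is finite dimensional, by essential incomparability
  set v : X →L[ℂ] X := ContinuousLinearMap.id ℂ X - B ∘L A with hvdef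
  obtain ⟨-, -, hq⟩ := hinc A B
  haveI hqv : FiniteDimensional ℂ (X ⧸ LinearMap.range (v : X →ₗ[ℂ] X)) := hq
  have hcoker : FiniteDimensional ℂ (Y ⧸ LinearMap.range (C : Y →ₗ[ℂ] Y)) := by
    let φ : X →ₗ[ℂ] Y ⧸ LinearMap.range (C : Y →ₗ[ℂ] Y) :=
      (LinearMap.range (C : Y →ₗ[ℂ] Y)).mkQ ∘ₗ (A : X →ₗ[ℂ] Y)
    have hker : LinearMap.range (v : X →ₗ[ℂ] X) ≤ LinearMap.ker φ := by
      rintro _ ⟨x, rfl⟩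
      have hAv : A (v x) = C (A x) := by
        have hk := key (A x)
        have hvx : A (v x) = A x - A (B (A x)) := by simp [v]
        rw [hvx, eq_comm, eq_sub_iff_add_eq]
        exact hk.symm
      simp only [φ, LinearMap.mem_ker, LinearMap.comp_apply, Submodule.mkQ_apply,
        ContinuousLinearMap.coe_coe, hAv, Submodule.Quotient.mk_eq_zero]
      exact LinearMap.mem_range_self _ (A x)
    let φ' : (X ⧸ LinearMap.range (v : X →ₗ[ℂ] X)) →ₗ[ℂ] Y ⧸ LinearMap.range (C : Y →ₗ[ℂ] Y) :=
      Submodule.liftQ (LinearMap.range (v : X →ₗ[ℂ] X)) φ hker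
    have hsurj : Function.Surjective φ' := by
      intro q
      obtain ⟨y, rfl⟩ := Submodule.mkQ_surjective _ q
      refine ⟨Submodule.Quotient.mk (B y), ?_⟩
      show Submodule.Quotient.mk (A (B y)) = Submodule.Quotient.mk y
      rw [Submodule.Quotient.eq]
      have hC' : C y = y - A (B y) := eq_sub_of_add_eq (key y).symm
      have : A (B y) - y = -(C y) := by rw [hC', neg_sub]
      rw [this]
      exact neg_mem (LinearMap.mem_range_self _ y)
    exact Module.Finite.of_surjective φ' hsurj
  exact hY (finiteDimensional_of_compact_of_finiteDimensional_quotient C hC hcoker)
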